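/- Let λ ∈ ℂ. Let P : ℂ → ℂ and A : ℂ → M₂(ℂ) be complex-differentiable at λ, with A(λ) invertible. Define B(z) = A(z) · (I₂ + P(z)·σ⁺). Then B(λ) is invertible and tr( B′(λ) · σ₃ · B(λ)^{−1} ) = tr( A′(λ) · σ₃ · A(λ)^{−1} ) − 2·P(λ) · tr( A′(λ) · σ⁺ · A(λ)^{−1} ). -/

import Mathlib

/-- Jump formula for `tr(∂_λ B · σ₃ · B⁻¹)` with `B(z) = A(z)(I₂ + P(z)σ⁺)`:
it equals `tr(A'σ₃A⁻¹) - 2P(λ)·tr(A'σ⁺A⁻¹)`. -/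
theorem statement8 (lam : ℂ) (P : ℂ → ℂ) (A : ℂ → Matrix (Fin 2) (Fin 2) ℂ)
    (hP : DifferentiableAt ℂ P lam)
    (hA : ∀ i j, DifferentiableAt ℂ (fun z => A z i j) lam)
    (hAinv : IsUnit (A lam))
    (B : ℂ → Matrix (Fin 2) (Fin 2) ℂ)
    (hB : ∀ z, B z = A z * ((1 : Matrix (Fin 2) (Fin 2) ℂ) + P z • !![0, 1; 0, 0])) :
    IsUnit (B lam) ∧
    Matrix.trace ((Matrix.of fun i j => deriv (fun z => B z i j) lam) *
        (!![1, 0; 0, -1] : Matrix (Fin 2) (Fin 2) ℂ) * (B lam)⁻¹)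
      = Matrix.trace ((Matrix.of fun i j => deriv (fun z => A z i j) lam) *
          (!![1, 0; 0, -1] : Matrix (Fin 2) (Fin 2) ℂ) * (A lam)⁻¹)
        - 2 * P lam *
          Matrix.trace ((Matrix.of fun i j => deriv (fun z => A z i j) lam) *
            (!![0, 1; 0, 0] : Matrix (Fin 2) (Fin 2) ℂ) * (A lam)⁻¹) := by
  classical
  set S : Matrix (Fin 2) (Fin 2) ℂ := !![0, 1; 0, 0] with hS
  set T : Matrix (Fin 2) (Fin 2) ℂ := !![1, 0; 0, -1] with hT
  have hM : ∀ z, (1 : Matrix (Fin 2) (Fin 2) ℂ) + P z • !![0, 1; 0, 0]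
      = !![1, P z; 0, 1] := by
    intro z
    ext i j
    fin_cases i <;> fin_cases j <;>
      simp [Matrix.one_apply]
  have hBU : ∀ z, B z = A z * !![1, P z; 0, 1] := by
    intro z; rw [hB z, hM z]
  have hUV : (!![1, P lam; 0, 1] : Matrix (Fin 2) (Fin 2) ℂ) * !![1, -P lam; 0, 1] = 1 := by
    ext i j
    fin_cases i <;> fin_cases j <;>
      simp [Matrix.mul_apply, Fin.sum_univ_two, Matrix.one_apply]
  have hUunit : IsUnit (!![1, P lam; 0, 1] : Matrix (Fin 2) (Fin 2) ℂ) := by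
    rw [Matrix.isUnit_iff_isUnit_det]
    simp [Matrix.det_fin_two_of]
  have hBunit : IsUnit (B lam) := by
    rw [hBU lam]; exact hAinv.mul hUunit
  refine ⟨hBunit, ?_⟩
  have hBinv : (B lam)⁻¹ = !![1, -P lam; 0, 1] * (A lam)⁻¹ := by
    rw [hBU lam, Matrix.mul_inv_rev, Matrix.inv_eq_right_inv hUV]
  -- the derivative matrix of B
  have hBderiv : (Matrix.of fun i j => deriv (fun z => B z i j) lam)
      = (Matrix.of fun i j => deriv (fun z => A z i j) lam) * !![1, P lam; 0, 1]
        + deriv P lam • (A lam * S) := by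
    ext i j
    have hfun : ∀ i j, (fun z => B z i j)
        = fun z => A z i 0 * (!![1, P z; 0, 1] : Matrix (Fin 2) (Fin 2) ℂ) 0 j
            + A z i 1 * (!![1, P z; 0, 1] : Matrix (Fin 2) (Fin 2) ℂ) 1 j := by
      intro i j; funext z
      rw [hBU z]
      simp [Matrix.mul_apply, Fin.sum_univ_two]
    have hd : ∀ i : Fin 2, deriv (fun z => A z i 0 * P z + A z i 1) lam
        = deriv (fun z => A z i 0) lam * P lam + A lam i 0 * deriv P lam
          + deriv (fun z => A z i 1) lam := by
      intro i
      rw [deriv_fun_add (f := fun z => A z i 0 * P z) ((hA i 0).mul hP) (hA i 1), deriv_fun_mul (hA i 0) hP]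
    simp only [Matrix.of_apply]
    fin_cases i <;> fin_cases j <;>
      · rw [hfun]
        simp only [Matrix.of_apply, Matrix.cons_val', Matrix.cons_val_zero, Matrix.cons_val_one,
          Matrix.head_cons, Matrix.head_fin_const, Matrix.empty_val',
          Matrix.cons_val_fin_one, Fin.mk_zero, Fin.mk_one, mul_one, mul_zero, add_zero, zero_add]
        first
        | (simp [Matrix.mul_apply, Fin.sum_univ_two, hS]; done)
        | (rw [hd]; simp [Matrix.mul_apply, Fin.sum_univ_two, hS]; ring)
  set A' : Matrix (Fin 2) (Fin 2) ℂ := Matrix.of fun i j => deriv (fun z => A z i j) lam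
  have h1 : (!![1, P lam; 0, 1] : Matrix (Fin 2) (Fin 2) ℂ) * T * !![1, -P lam; 0, 1]
      = T - (2 * P lam) • S := by
    ext i j
    fin_cases i <;> fin_cases j <;>
      · simp [Matrix.mul_apply, Fin.sum_univ_two, hS, hT]
        try ring
  have h2 : S * T * (!![1, -P lam; 0, 1] : Matrix (Fin 2) (Fin 2) ℂ) = -S := by
    ext i j
    fin_cases i <;> fin_cases j <;>
      simp [Matrix.mul_apply, Fin.sum_univ_two, hS, hT]
  have hdet : IsUnit (A lam).det := (Matrix.isUnit_iff_isUnit_det _).mp hAinv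
  have hAinvA : (A lam)⁻¹ * A lam = 1 := Matrix.nonsing_inv_mul _ hdet
  rw [hBderiv, hBinv]
  have expand : (A' * !![1, P lam; 0, 1] + deriv P lam • (A lam * S)) * T
        * (!![1, -P lam; 0, 1] * (A lam)⁻¹)
      = A' * (!![1, P lam; 0, 1] * T * !![1, -P lam; 0, 1]) * (A lam)⁻¹
        + deriv P lam • (A lam * (S * T * !![1, -P lam; 0, 1]) * (A lam)⁻¹) := by
    simp only [add_mul, Matrix.smul_mul, mul_assoc]
  rw [expand, h1, h2, Matrix.trace_add, Matrix.trace_smul]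
  have htr2 : Matrix.trace (A lam * -S * (A lam)⁻¹) = 0 := by
    rw [Matrix.trace_mul_cycle, hAinvA, one_mul]
    simp [hS, Matrix.trace_fin_two]
  have htr1 : A' * (T - (2 * P lam) • S) * (A lam)⁻¹
      = A' * T * (A lam)⁻¹ - (2 * P lam) • (A' * S * (A lam)⁻¹) := by
    simp only [mul_sub, sub_mul, Matrix.mul_smul, Matrix.smul_mul]
  rw [htr1, htr2, Matrix.trace_sub, Matrix.trace_smul]
  simp [smul_eq_mul]
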